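/- Let (Σ,μ) be a σ-finite measure space, 1 ≤ p < ∞, Y a Banach space, and let Ω : L_p(μ) → Y be a quasi-linear map which is not locally trivial. Then there exists a sequence (u_n) of norm-one, pairwise disjointly supported functions in L_p(μ) such that the restriction of Ω to the closed linear span of {u_n : n ∈ ℕ} (a subspace isometric to ℓ_p, since normalized disjointly supported sequences in L_p span isometric copies of ℓ_p) is not locally trivial. -/

import Mathlib

set_option synthInstance.maxHeartbeats 1000000
set_option maxHeartbeats 1000000
set_option linter.unusedSectionVars false
set_option linter.unusedVariables false


open MeasureTheory
open scoped ENNReal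

noncomputable section

section Defs

variable {X Y : Type*} [NormedAddCommGroup X] [NormedSpace ℝ X]
  [NormedAddCommGroup Y] [NormedSpace ℝ Y]

/-- `Ω` is quasi-linear: homogeneous and quasi-additive. -/
def IsQuasiLinear (Ω : X → Y) : Prop :=
  (∀ (c : ℝ) (x : X), Ω (c • x) = c • Ω x) ∧
    ∃ Q : ℝ, 0 ≤ Q ∧ ∀ x y : X, ‖Ω (x + y) - Ω x - Ω y‖ ≤ Q * (‖x‖ + ‖y‖)

/-- `Ω` is `C`-trivial on the subspace `E`. -/
def TrivialOnWith (Ω : X → Y) (E : Submodule ℝ X) (C : ℝ) : Prop :=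
  ∃ L : E →ₗ[ℝ] Y, ∀ x : E, ‖Ω x - L x‖ ≤ C * ‖(x : X)‖

/-- `Ω` is locally trivial: a uniform constant works for all finite-dimensional subspaces. -/
def LocallyTrivial (Ω : X → Y) : Prop :=
  ∃ C : ℝ, 0 < C ∧ ∀ F : Submodule ℝ X, FiniteDimensional ℝ F → TrivialOnWith Ω F C

/-- `Ω` is locally trivial on the subspace `H`. -/
def LocallyTrivialOn (Ω : X → Y) (H : Submodule ℝ X) : Prop :=
  ∃ C : ℝ, 0 < C ∧ ∀ F : Submodule ℝ X, F ≤ H → FiniteDimensional ℝ F → TrivialOnWith Ω F C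

end Defs

/-- Two elements of `L_p(μ)` are disjointly supported (up to null sets). -/
def DisjSupp {α : Type*} [MeasurableSpace α] {μ : Measure α} {q : ℝ≥0∞}
    (f g : Lp ℝ q μ) : Prop := ∀ᵐ a ∂μ, f a = 0 ∨ g a = 0

namespace QLAux

variable {α : Type*} [MeasurableSpace α] {μ : Measure α} {q : ℝ≥0∞} [Fact (1 ≤ q)]

/-- Multiplication by the indicator of `A`, as a linear map on `Lp`. -/
def res (A : Set α) (hA : MeasurableSet A) : Lp ℝ q μ →ₗ[ℝ] Lp ℝ q μ where
  toFun f := ((Lp.memLp f).indicator hA).toLp (A.indicator f)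
  map_add' f g := by
    refine Lp.ext ?_
    filter_upwards [MemLp.coeFn_toLp (E := ℝ) (((Lp.memLp (f + g))).indicator hA),
      MemLp.coeFn_toLp (E := ℝ) ((Lp.memLp f).indicator hA),
      MemLp.coeFn_toLp (E := ℝ) ((Lp.memLp g).indicator hA),
      Lp.coeFn_add f g,
      Lp.coeFn_add (((Lp.memLp f).indicator hA).toLp (A.indicator f))
        (((Lp.memLp g).indicator hA).toLp (A.indicator g))] with a h1 h2 h3 h4 h5
    rw [h1, h5, Pi.add_apply, h2, h3]
    rcases Classical.em (a ∈ A) with ha | ha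
    · rw [Set.indicator_of_mem ha, Set.indicator_of_mem ha, Set.indicator_of_mem ha, h4,
        Pi.add_apply]
    · rw [Set.indicator_of_notMem ha, Set.indicator_of_notMem ha, Set.indicator_of_notMem ha,
        add_zero]
  map_smul' c f := by
    refine Lp.ext ?_
    filter_upwards [MemLp.coeFn_toLp (E := ℝ) (((Lp.memLp (c • f))).indicator hA),
      MemLp.coeFn_toLp (E := ℝ) ((Lp.memLp f).indicator hA),
      Lp.coeFn_smul c f,
      Lp.coeFn_smul c (((Lp.memLp f).indicator hA).toLp (A.indicator f))] with a h1 h2 h3 h4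
    rw [h1, RingHom.id_apply, h4, Pi.smul_apply, h2]
    rcases Classical.em (a ∈ A) with ha | ha
    · rw [Set.indicator_of_mem ha, Set.indicator_of_mem ha, h3, Pi.smul_apply]
    · rw [Set.indicator_of_notMem ha, Set.indicator_of_notMem ha, smul_zero]

theorem res_coeFn (A : Set α) (hA : MeasurableSet A) (f : Lp ℝ q μ) :
    ⇑(res A hA f) =ᵐ[μ] A.indicator ⇑f :=
  MemLp.coeFn_toLp (E := ℝ) ((Lp.memLp f).indicator hA)

theorem res_norm_le (A : Set α) (hA : MeasurableSet A) (f : Lp ℝ q μ) :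
    ‖res A hA f‖ ≤ ‖f‖ := by
  rw [Lp.norm_def, Lp.norm_def, eLpNorm_congr_ae (res_coeFn A hA f)]
  refine ENNReal.toReal_mono (Lp.eLpNorm_ne_top f) (eLpNorm_mono_ae ?_)
  refine ae_of_all μ fun a => ?_
  by_cases ha : a ∈ A <;> simp [Set.indicator_apply, ha]

theorem res_add_compl (A : Set α) (hA : MeasurableSet A) (f : Lp ℝ q μ) :
    res A hA f + res Aᶜ hA.compl f = f := by
  refine Lp.ext ?_
  filter_upwards [res_coeFn A hA f, res_coeFn Aᶜ hA.compl f,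
    Lp.coeFn_add (res A hA f) (res Aᶜ hA.compl f)] with a h1 h2 h3
  rw [h3, Pi.add_apply, h1, h2]
  by_cases ha : a ∈ A <;> simp [Set.indicator_apply, ha]

theorem res_supp (A : Set α) (hA : MeasurableSet A) (f : Lp ℝ q μ) :
    ∀ᵐ a ∂μ, a ∉ A → res A hA f a = 0 := by
  filter_upwards [res_coeFn A hA f] with a h1 ha
  rw [h1]; simp [Set.indicator_apply, ha]

theorem res_eq_zero (A : Set α) (hA : MeasurableSet A) (f : Lp ℝ q μ)
    (h : ∀ᵐ a ∂μ, a ∈ A → f a = 0) : res A hA f = 0 := by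
  refine Lp.ext ?_
  filter_upwards [res_coeFn A hA f, Lp.coeFn_zero (E := ℝ) (p := q) (μ := μ), h] with a h1 h2 h3
  rw [h1, h2]
  rcases Classical.em (a ∈ A) with ha | ha
  · simp [Set.indicator_apply, ha, h3 ha]
  · simp [Set.indicator_apply, ha]


section QL
variable {X Y : Type*} [NormedAddCommGroup X] [NormedSpace ℝ X]
  [NormedAddCommGroup Y] [NormedSpace ℝ Y]
variable {Ω : X → Y}

theorem hom_zero (hhom : ∀ (c : ℝ) (x : X), Ω (c • x) = c • Ω x) : Ω 0 = 0 := by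
  have := hhom 0 0
  simpa using this

theorem trivialOnWith_mono {E : Submodule ℝ X} {C C' : ℝ} (h : TrivialOnWith Ω E C)
    (hle : C ≤ C') : TrivialOnWith Ω E C' := by
  obtain ⟨L, hL⟩ := h
  exact ⟨L, fun x => (hL x).trans (by
    have := norm_nonneg (x : X)
    nlinarith)⟩

theorem trivialOnWith_of_le {E E' : Submodule ℝ X} {C : ℝ} (hle : E ≤ E')
    (h : TrivialOnWith Ω E' C) : TrivialOnWith Ω E C := by
  obtain ⟨L, hL⟩ := h
  refine ⟨L.comp (Submodule.inclusion hle), fun x => ?_⟩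
  have := hL (Submodule.inclusion hle x)
  simpa using this

theorem trivialOnWith_span_singleton (hhom : ∀ (c : ℝ) (x : X), Ω (c • x) = c • Ω x)
    (w : X) : TrivialOnWith Ω (Submodule.span ℝ {w}) 0 := by
  rcases eq_or_ne w 0 with rfl | hw
  · refine ⟨0, fun x => ?_⟩
    obtain ⟨a, ha⟩ := Submodule.mem_span_singleton.mp x.2
    have hx : (x : X) = 0 := by rw [← ha, smul_zero]
    simp [hx, hom_zero hhom]
  · refine ⟨LinearMap.smulRight ((LinearEquiv.coord ℝ X w hw : Submodule.span ℝ {w} →ₗ[ℝ] ℝ))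
      (Ω w), fun x => ?_⟩
    have hx : (x : X) = (LinearEquiv.coord ℝ X w hw x) • w :=
      (LinearEquiv.coord_apply_smul ℝ X w hw x).symm
    rw [hx, hhom]
    simp

theorem trivialOnWith_span_zero (hhom : ∀ (c : ℝ) (x : X), Ω (c • x) = c • Ω x)
    {ι : Type*} (v : ι → X) (hv : ∀ i, v i = 0) {C : ℝ} (hC : 0 ≤ C) :
    TrivialOnWith Ω (Submodule.span ℝ (Set.range v)) C := by
  have hle : Submodule.span ℝ (Set.range v) ≤ Submodule.span ℝ {(0 : X)} := by
    refine Submodule.span_le.mpr ?_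
    rintro x ⟨i, rfl⟩
    simp [hv i, Submodule.zero_mem]
  exact trivialOnWith_of_le hle (trivialOnWith_mono (trivialOnWith_span_singleton hhom 0) hC)

theorem qsum (ψ : X → Y) (r : ℝ) (hr : 0 ≤ r)
    (hhom : ∀ (c : ℝ) (x : X), ψ (c • x) = c • ψ x)
    (hq : ∀ x y : X, ‖ψ (x + y) - ψ x - ψ y‖ ≤ r * (‖x‖ + ‖y‖))
    {ι : Type*} (s : Finset ι) (z : ι → X) :
    ‖ψ (∑ i ∈ s, z i) - ∑ i ∈ s, ψ (z i)‖ ≤ 2 * r * s.card * ∑ i ∈ s, ‖z i‖ := by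
  classical
  induction s using Finset.induction_on with
  | empty => simp [hom_zero hhom]
  | @insert a s ha ih =>
    rw [Finset.sum_insert ha, Finset.sum_insert ha, Finset.sum_insert ha]
    have h1 : ‖ψ (z a + ∑ i ∈ s, z i) - ψ (z a) - ψ (∑ i ∈ s, z i)‖ ≤
        r * (‖z a‖ + ‖∑ i ∈ s, z i‖) := hq _ _
    have h2 : ‖∑ i ∈ s, z i‖ ≤ ∑ i ∈ s, ‖z i‖ := norm_sum_le _ _
    have h3 : (0:ℝ) ≤ ∑ i ∈ s, ‖z i‖ := Finset.sum_nonneg fun i _ => norm_nonneg _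
    have h4 : (0:ℝ) ≤ ‖z a‖ := norm_nonneg _
    have key : ‖ψ (z a + ∑ i ∈ s, z i) - (ψ (z a) + ∑ i ∈ s, ψ (z i))‖ ≤
        ‖ψ (z a + ∑ i ∈ s, z i) - ψ (z a) - ψ (∑ i ∈ s, z i)‖ +
          ‖ψ (∑ i ∈ s, z i) - ∑ i ∈ s, ψ (z i)‖ := by
      have : ψ (z a + ∑ i ∈ s, z i) - (ψ (z a) + ∑ i ∈ s, ψ (z i)) =
          (ψ (z a + ∑ i ∈ s, z i) - ψ (z a) - ψ (∑ i ∈ s, z i)) +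
            (ψ (∑ i ∈ s, z i) - ∑ i ∈ s, ψ (z i)) := by abel
      rw [this]
      exact norm_add_le _ _
    have hcard : ((insert a s).card : ℝ) = s.card + 1 := by
      rw [Finset.card_insert_of_notMem ha]; push_cast; ring
    calc ‖ψ (z a + ∑ i ∈ s, z i) - (ψ (z a) + ∑ i ∈ s, ψ (z i))‖
        ≤ r * (‖z a‖ + ‖∑ i ∈ s, z i‖) + 2 * r * s.card * ∑ i ∈ s, ‖z i‖ := by
          refine key.trans (add_le_add h1 ih)
      _ ≤ 2 * r * (insert a s).card * (‖z a‖ + ∑ i ∈ s, ‖z i‖) := by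
          rw [hcard]
          have hcs : (0:ℝ) ≤ (s.card : ℝ) := Nat.cast_nonneg _
          nlinarith [mul_le_mul_of_nonneg_left h2 hr, mul_nonneg (mul_nonneg hr hcs) h4,
            mul_nonneg (mul_nonneg hr hcs) h3, mul_nonneg hr h4, mul_nonneg hr h3]

theorem coord_bound (F : Submodule ℝ X) [FiniteDimensional ℝ F] :
    ∃ (n : ℕ) (b : Module.Basis (Fin n) ℝ F) (K : Fin n → ℝ), (∀ i, 0 ≤ K i) ∧
      ∀ (i : Fin n) (x : F), |b.repr x i| ≤ K i * ‖x‖ := by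
  classical
  let b : Module.Basis (Fin (Module.finrank ℝ F)) ℝ F := Module.finBasis ℝ F
  let cK : Fin (Module.finrank ℝ F) → (F →L[ℝ] ℝ) := fun i =>
    LinearMap.toContinuousLinearMap (b.coord i)
  let K : Fin (Module.finrank ℝ F) → ℝ := fun i => ‖cK i‖
  have hK0 : ∀ i, 0 ≤ K i := fun i => norm_nonneg (cK i)
  have hK : ∀ (i) (x : F), |b.repr x i| ≤ K i * ‖x‖ := by
    intro i x
    have h1 := (cK i).le_opNorm x
    have h2 : cK i x = b.repr x i := by
      simp [cK, Module.Basis.coord_apply]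
    rw [h2, Real.norm_eq_abs] at h1
    exact h1
  exact ⟨_, b, K, hK0, hK⟩

theorem lemT (hhom : ∀ (c : ℝ) (x : X), Ω (c • x) = c • Ω x)
    (Q : ℝ) (hQ0 : 0 ≤ Q) (hq : ∀ x y : X, ‖Ω (x + y) - Ω x - Ω y‖ ≤ Q * (‖x‖ + ‖y‖))
    (F : Submodule ℝ X) [FiniteDimensional ℝ F] :
    ∃ M : ℝ, 0 ≤ M ∧ ∀ (S : F →ₗ[ℝ] X) (ε : ℝ), 0 ≤ ε → (∀ x : F, ‖S x‖ ≤ ε * ‖x‖) →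
      ∃ L : F →ₗ[ℝ] Y, ∀ x : F, ‖Ω (S x) - L x‖ ≤ Q * ε * M * ‖x‖ := by
  obtain ⟨n, b, K, hK0, hK⟩ := coord_bound F
  have hM0 : (0:ℝ) ≤ 2 * n * ∑ i, K i * ‖(b i : X)‖ := by
    have : (0:ℝ) ≤ ∑ i, K i * ‖(b i : X)‖ :=
      Finset.sum_nonneg fun i _ => mul_nonneg (hK0 i) (norm_nonneg _)
    positivity
  refine ⟨2 * n * ∑ i, K i * ‖(b i : X)‖, hM0, fun S ε hε hS => ?_⟩
  set ψ : F → Y := fun x => Ω (S x) with hψ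
  have hψhom : ∀ (c : ℝ) (x : F), ψ (c • x) = c • ψ x := by
    intro c x
    show Ω (S (c • x)) = c • Ω (S x)
    rw [S.map_smul, hhom]
  have hψq : ∀ x y : F, ‖ψ (x + y) - ψ x - ψ y‖ ≤ (Q * ε) * (‖x‖ + ‖y‖) := by
    intro x y
    calc ‖Ω (S (x + y)) - Ω (S x) - Ω (S y)‖ = ‖Ω (S x + S y) - Ω (S x) - Ω (S y)‖ := by
          rw [map_add]
      _ ≤ Q * (‖S x‖ + ‖S y‖) := hq _ _
      _ ≤ (Q * ε) * (‖x‖ + ‖y‖) := by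
          have h1 := hS x; have h2 := hS y
          nlinarith [norm_nonneg (S x), norm_nonneg (S y)]
  refine ⟨∑ i, LinearMap.smulRight (b.coord i) (Ω (S (b i))), fun x => ?_⟩
  have hrepr : ∑ i, b.repr x i • b i = x := b.sum_repr x
  have hsum := qsum ψ (Q * ε) (by positivity) hψhom hψq Finset.univ
    (fun i => b.repr x i • b i)
  rw [hrepr] at hsum
  simp only [Finset.card_univ, Fintype.card_fin] at hsum
  have hL : (∑ i, LinearMap.smulRight (b.coord i) (Ω (S (b i)))) x
      = ∑ i, ψ (b.repr x i • b i) := by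
    rw [LinearMap.sum_apply]
    refine Finset.sum_congr rfl fun i _ => ?_
    rw [LinearMap.smulRight_apply, Module.Basis.coord_apply, hψhom]
  rw [hL]
  refine hsum.trans ?_
  have hz : ∑ i, ‖b.repr x i • b i‖ ≤ (∑ i, K i * ‖(b i : X)‖) * ‖x‖ := by
    rw [Finset.sum_mul]
    refine Finset.sum_le_sum fun i _ => ?_
    rw [norm_smul, Real.norm_eq_abs]
    have hb : ‖b i‖ = ‖(b i : X)‖ := rfl
    rw [hb]
    have := hK i x
    nlinarith [norm_nonneg ((b i : X)), abs_nonneg (b.repr x i), norm_nonneg x, hK0 i]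
  have hQε : (0:ℝ) ≤ Q * ε := by positivity
  have hn : (0:ℝ) ≤ 2 * Q * ε * n := by positivity
  calc 2 * (Q * ε) * n * ∑ i, ‖b.repr x i • b i‖
      ≤ 2 * (Q * ε) * n * ((∑ i, K i * ‖(b i : X)‖) * ‖x‖) := by
        refine mul_le_mul_of_nonneg_left hz (by positivity)
    _ = Q * ε * (2 * n * ∑ i, K i * ‖(b i : X)‖) * ‖x‖ := by ring

theorem lemPerturb (hhom : ∀ (c : ℝ) (x : X), Ω (c • x) = c • Ω x)
    (Q : ℝ) (hQ0 : 0 ≤ Q) (hq : ∀ x y : X, ‖Ω (x + y) - Ω x - Ω y‖ ≤ Q * (‖x‖ + ‖y‖))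
    (F : Submodule ℝ X) [FiniteDimensional ℝ F] (C : ℝ) (hC : 0 ≤ C) :
    ∃ ε₀ : ℝ, 0 < ε₀ ∧ ∀ (T : F →ₗ[ℝ] X), (∀ x : F, ‖T x - (x : X)‖ ≤ ε₀ * ‖x‖) →
      ¬ TrivialOnWith Ω F (C + 3 * Q + 3) → ¬ TrivialOnWith Ω (LinearMap.range T) C := by
  obtain ⟨M, hM0, hM⟩ := lemT hhom Q hQ0 hq F
  set ε₀ : ℝ := min 1 (min (1 / (Q * M + 1)) (1 / (C + 1))) with hε₀
  have hQM : (0:ℝ) < Q * M + 1 := by positivity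
  have hC1 : (0:ℝ) < C + 1 := by positivity
  have hε₀pos : 0 < ε₀ := by
    refine lt_min one_pos (lt_min (by positivity) (by positivity))
  have hε₀1 : ε₀ ≤ 1 := min_le_left _ _
  have hε₀QM : ε₀ ≤ 1 / (Q * M + 1) := le_trans (min_le_right _ _) (min_le_left _ _)
  have hε₀C : ε₀ ≤ 1 / (C + 1) := le_trans (min_le_right _ _) (min_le_right _ _)
  have hQεM : Q * ε₀ * M ≤ 1 := by
    rw [le_div_iff₀ hQM] at hε₀QM
    nlinarith
  have hCε : C * ε₀ ≤ 1 := by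
    rw [le_div_iff₀ hC1] at hε₀C
    nlinarith
  refine ⟨ε₀, hε₀pos, fun T hT hbad htriv => ?_⟩
  apply hbad
  obtain ⟨L, hL⟩ := htriv
  set S : F →ₗ[ℝ] X := F.subtype - T with hSdef
  have hS : ∀ x : F, ‖S x‖ ≤ ε₀ * ‖x‖ := by
    intro x
    have : S x = -(T x - (x : X)) := by
      simp [hSdef, sub_eq_add_neg]
    rw [this, norm_neg]
    exact hT x
  obtain ⟨L₁, hL₁⟩ := hM S ε₀ hε₀pos.le hS
  refine ⟨L.comp T.rangeRestrict + L₁, fun x => ?_⟩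
  have hxnorm : ‖(x : X)‖ = ‖x‖ := rfl
  have hdecomp : (x : X) = T x + S x := by
    simp [hSdef]
  have hq1 : ‖Ω (x : X) - Ω (T x) - Ω (S x)‖ ≤ Q * (‖T x‖ + ‖S x‖) := by
    rw [hdecomp]
    exact hq _ _
  have hTx : ‖T x‖ ≤ (1 + ε₀) * ‖x‖ := by
    have h1 := norm_add_le (T x - (x : X)) ((x : X))
    rw [sub_add_cancel] at h1
    have := hT x
    rw [hxnorm] at h1
    nlinarith
  have hrr : ((T.rangeRestrict x : LinearMap.range T) : X) = T x := rfl
  have hLx := hL (T.rangeRestrict x)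
  rw [hrr] at hLx
  have key : Ω (x : X) - (L (T.rangeRestrict x) + L₁ x) =
      (Ω (x : X) - Ω (T x) - Ω (S x)) + (Ω (T x) - L (T.rangeRestrict x))
        + (Ω (S x) - L₁ x) := by abel
  have hnorm : ‖Ω (x : X) - (L (T.rangeRestrict x) + L₁ x)‖ ≤
      ‖Ω (x : X) - Ω (T x) - Ω (S x)‖ + ‖Ω (T x) - L (T.rangeRestrict x)‖
        + ‖Ω (S x) - L₁ x‖ := by
    rw [key]
    exact (norm_add_le _ _).trans (by
      have := norm_add_le (Ω (x : X) - Ω (T x) - Ω (S x)) (Ω (T x) - L (T.rangeRestrict x))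
      linarith)
  have hfin : ‖Ω (x : X) - (L (T.rangeRestrict x) + L₁ x)‖ ≤ (C + 3 * Q + 3) * ‖x‖ := by
    have h2 := hS x
    have h3 := hL₁ x
    have hx0 : (0:ℝ) ≤ ‖x‖ := norm_nonneg _
    have hQε₀ : Q * ε₀ * M * ‖x‖ ≤ 1 * ‖x‖ := mul_le_mul_of_nonneg_right hQεM hx0
    have hCε₀ : C * ε₀ * ‖x‖ ≤ 1 * ‖x‖ := mul_le_mul_of_nonneg_right hCε hx0
    have h4 : ‖Ω (T x) - L (T.rangeRestrict x)‖ ≤ C * ((1 + ε₀) * ‖x‖) :=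
      hLx.trans (mul_le_mul_of_nonneg_left hTx hC)
    have h4' : ‖Ω (T x) - L (T.rangeRestrict x)‖ ≤ C * ‖x‖ + ‖x‖ := by
      refine h4.trans ?_
      nlinarith
    have hTS : ‖T x‖ + ‖S x‖ ≤ (1 + 2 * ε₀) * ‖x‖ := by nlinarith
    have hQQ : Q * ε₀ ≤ Q := by nlinarith
    have hq2 : ‖Ω (x : X) - Ω (T x) - Ω (S x)‖ ≤ Q * ‖x‖ + 2 * (Q * ε₀) * ‖x‖ := by
      refine hq1.trans ?_
      have := mul_le_mul_of_nonneg_left hTS hQ0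
      nlinarith
    have h3' : ‖Ω (S x) - L₁ x‖ ≤ ‖x‖ := h3.trans (by nlinarith)
    nlinarith [hnorm, hq2, mul_nonneg (sub_nonneg.mpr hQQ) hx0]
  have hunfold : (L.comp T.rangeRestrict + L₁) x = L (T.rangeRestrict x) + L₁ x := rfl
  rw [hunfold, hxnorm]
  exact hfin

end QL
section LpCtx
variable {α : Type*} [MeasurableSpace α] {μ : Measure α} {q : ℝ≥0∞} [Fact (1 ≤ q)]
  {Y : Type*} [NormedAddCommGroup Y] [NormedSpace ℝ Y]
variable (Ω : Lp ℝ q μ → Y)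

/-- A finite family of disjointly supported functions, supported inside `T`. -/
def FamIn (T : Set α) {m : ℕ} (v : Fin m → Lp ℝ q μ) : Prop :=
  (∀ i, ∀ᵐ a ∂μ, a ∉ T → v i a = 0) ∧ Pairwise fun i j => DisjSupp (v i) (v j)

/-- There is a disjoint family supported in `T` on whose span `Ω` is not `c`-trivial. -/
def Bad (T : Set α) (c : ℝ) : Prop :=
  ∃ (m : ℕ) (v : Fin m → Lp ℝ q μ), FamIn T v ∧
    ¬ TrivialOnWith Ω (Submodule.span ℝ (Set.range v)) c

def Unbdd (T : Set α) : Prop := ∀ c : ℝ, Bad Ω T c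

variable {Ω}

theorem famIn_mono {T T' : Set α} (hTT : T ⊆ T') {m : ℕ} {v : Fin m → Lp ℝ q μ}
    (h : FamIn T v) : FamIn T' v := by
  refine ⟨fun i => ?_, h.2⟩
  filter_upwards [h.1 i] with a ha han
  exact ha fun hmem => han (hTT hmem)

theorem bad_mono_set {T T' : Set α} (hTT : T ⊆ T') {c : ℝ} (h : Bad Ω T c) : Bad Ω T' c := by
  obtain ⟨m, v, hf, ht⟩ := h
  exact ⟨m, v, famIn_mono hTT hf, ht⟩

theorem bad_anti_const {T : Set α} {c c' : ℝ} (hcc : c' ≤ c) (h : Bad Ω T c) : Bad Ω T c' := by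
  obtain ⟨m, v, hf, ht⟩ := h
  exact ⟨m, v, hf, fun htr => ht (trivialOnWith_mono htr hcc)⟩

theorem unbdd_mono {T T' : Set α} (hTT : T ⊆ T') (h : Unbdd Ω T) : Unbdd Ω T' :=
  fun c => bad_mono_set hTT (h c)

theorem famIn_res {T : Set α} {m : ℕ} {v : Fin m → Lp ℝ q μ} (h : FamIn T v)
    (A : Set α) (hA : MeasurableSet A) :
    FamIn (T ∩ A) (fun i => res A hA (v i)) := by
  constructor
  · intro i
    filter_upwards [res_coeFn A hA (v i), h.1 i] with a h1 h2 han
    rw [h1]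
    rcases Classical.em (a ∈ A) with haA | haA
    · rw [Set.indicator_of_mem haA]
      exact h2 fun hT => han ⟨hT, haA⟩
    · exact Set.indicator_of_notMem haA _
  · intro i j hij
    have := h.2 hij
    filter_upwards [this, res_coeFn A hA (v i), res_coeFn A hA (v j)] with a hd h1 h2
    rw [h1, h2]
    rcases hd with hd | hd
    · left
      rcases Classical.em (a ∈ A) with haA | haA
      · rw [Set.indicator_of_mem haA, hd]
      · exact Set.indicator_of_notMem haA _
    · right
      rcases Classical.em (a ∈ A) with haA | haA
      · rw [Set.indicator_of_mem haA, hd]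
      · exact Set.indicator_of_notMem haA _

theorem mem_span_res {m : ℕ} (v : Fin m → Lp ℝ q μ) (A : Set α) (hA : MeasurableSet A)
    (x : Lp ℝ q μ) (hx : x ∈ Submodule.span ℝ (Set.range v)) :
    res A hA x ∈ Submodule.span ℝ (Set.range fun i => res A hA (v i)) := by
  have himg : (res A hA) '' (Set.range v) = Set.range (fun i => res A hA (v i)) := by
    rw [← Set.range_comp]
    rfl
  have hmem : res A hA x ∈ Submodule.map (res A hA) (Submodule.span ℝ (Set.range v)) :=
    ⟨x, hx, rfl⟩
  rwa [Submodule.map_span, himg] at hmem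

theorem combine (hhom : ∀ (c : ℝ) (x : Lp ℝ q μ), Ω (c • x) = c • Ω x)
    (Q : ℝ) (hQ0 : 0 ≤ Q)
    (hq : ∀ x y : Lp ℝ q μ, ‖Ω (x + y) - Ω x - Ω y‖ ≤ Q * (‖x‖ + ‖y‖))
    {m : ℕ} (v : Fin m → Lp ℝ q μ) (A : Set α) (hA : MeasurableSet A)
    {C₁ C₂ : ℝ} (hC₁ : 0 ≤ C₁) (hC₂ : 0 ≤ C₂)
    (t1 : TrivialOnWith Ω (Submodule.span ℝ (Set.range fun i => res A hA (v i))) C₁)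
    (t2 : TrivialOnWith Ω (Submodule.span ℝ (Set.range fun i => res Aᶜ hA.compl (v i))) C₂) :
    TrivialOnWith Ω (Submodule.span ℝ (Set.range v)) (C₁ + C₂ + 2 * Q) := by
  obtain ⟨L₁, hL₁⟩ := t1
  obtain ⟨L₂, hL₂⟩ := t2
  set G := Submodule.span ℝ (Set.range v) with hG
  have hmap1 : ∀ x : G, res A hA (x : Lp ℝ q μ) ∈
      Submodule.span ℝ (Set.range fun i => res A hA (v i)) :=
    fun x => mem_span_res v A hA _ x.2
  have hmap2 : ∀ x : G, res Aᶜ hA.compl (x : Lp ℝ q μ) ∈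
      Submodule.span ℝ (Set.range fun i => res Aᶜ hA.compl (v i)) :=
    fun x => mem_span_res v Aᶜ hA.compl _ x.2
  set P1 := LinearMap.codRestrict _ ((res A hA).comp G.subtype) hmap1 with hP1
  set P2 := LinearMap.codRestrict _ ((res Aᶜ hA.compl).comp G.subtype) hmap2 with hP2
  refine ⟨L₁.comp P1 + L₂.comp P2, fun x => ?_⟩
  have hcoe1 : ((P1 x : _) : Lp ℝ q μ) = res A hA (x : Lp ℝ q μ) := rfl
  have hcoe2 : ((P2 x : _) : Lp ℝ q μ) = res Aᶜ hA.compl (x : Lp ℝ q μ) := rfl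
  have hsplit : (x : Lp ℝ q μ) = res A hA (x : Lp ℝ q μ) + res Aᶜ hA.compl (x : Lp ℝ q μ) :=
    (res_add_compl A hA _).symm
  have hb1 := hL₁ (P1 x)
  have hb2 := hL₂ (P2 x)
  rw [hcoe1] at hb1
  rw [hcoe2] at hb2
  have hqq := hq (res A hA (x : Lp ℝ q μ)) (res Aᶜ hA.compl (x : Lp ℝ q μ))
  rw [← hsplit] at hqq
  have hn1 : ‖res A hA (x : Lp ℝ q μ)‖ ≤ ‖(x : Lp ℝ q μ)‖ := res_norm_le _ _ _
  have hn2 : ‖res Aᶜ hA.compl (x : Lp ℝ q μ)‖ ≤ ‖(x : Lp ℝ q μ)‖ := res_norm_le _ _ _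
  have hunfold : (L₁.comp P1 + L₂.comp P2) x = L₁ (P1 x) + L₂ (P2 x) := rfl
  rw [hunfold]
  have key : Ω (x : Lp ℝ q μ) - (L₁ (P1 x) + L₂ (P2 x)) =
      (Ω (x : Lp ℝ q μ) - Ω (res A hA (x : Lp ℝ q μ)) - Ω (res Aᶜ hA.compl (x : Lp ℝ q μ)))
        + (Ω (res A hA (x : Lp ℝ q μ)) - L₁ (P1 x))
        + (Ω (res Aᶜ hA.compl (x : Lp ℝ q μ)) - L₂ (P2 x)) := by abel
  have hnorm := norm_add₃_le (a := Ω (x : Lp ℝ q μ) - Ω (res A hA (x : Lp ℝ q μ)) -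
      Ω (res Aᶜ hA.compl (x : Lp ℝ q μ)))
    (b := Ω (res A hA (x : Lp ℝ q μ)) - L₁ (P1 x))
    (c := Ω (res Aᶜ hA.compl (x : Lp ℝ q μ)) - L₂ (P2 x))
  rw [← key] at hnorm
  have hx0 : (0:ℝ) ≤ ‖(x : Lp ℝ q μ)‖ := norm_nonneg _
  have hQn : Q * (‖res A hA (x : Lp ℝ q μ)‖ + ‖res Aᶜ hA.compl (x : Lp ℝ q μ)‖) ≤
      2 * Q * ‖(x : Lp ℝ q μ)‖ := by
    have hz1 := norm_nonneg (res A hA (x : Lp ℝ q μ))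
    have hz2 := norm_nonneg (res Aᶜ hA.compl (x : Lp ℝ q μ))
    nlinarith
  have hc1 : C₁ * ‖res A hA (x : Lp ℝ q μ)‖ ≤ C₁ * ‖(x : Lp ℝ q μ)‖ :=
    mul_le_mul_of_nonneg_left hn1 hC₁
  have hc2 : C₂ * ‖res Aᶜ hA.compl (x : Lp ℝ q μ)‖ ≤ C₂ * ‖(x : Lp ℝ q μ)‖ :=
    mul_le_mul_of_nonneg_left hn2 hC₂
  linarith [hnorm, hqq, hb1, hb2, hQn, hc1, hc2]

theorem eq_zero_of_famIn_empty {m : ℕ} {v : Fin m → Lp ℝ q μ} (h : FamIn (∅ : Set α) v)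
    (i : Fin m) : v i = 0 := by
  refine Lp.ext ?_
  filter_upwards [h.1 i, Lp.coeFn_zero (E := ℝ) (p := q) (μ := μ)] with a h1 h2
  rw [h2]
  exact h1 (by simp)

theorem unbdd_cover (hhom : ∀ (c : ℝ) (x : Lp ℝ q μ), Ω (c • x) = c • Ω x)
    (Q : ℝ) (hQ0 : 0 ≤ Q)
    (hq : ∀ x y : Lp ℝ q μ, ‖Ω (x + y) - Ω x - Ω y‖ ≤ Q * (‖x‖ + ‖y‖)) :
    ∀ (l : List (Set α)), (∀ A ∈ l, MeasurableSet A) → ∀ (D : Set α), MeasurableSet D →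
      Unbdd Ω D → (∀ a ∈ D, ∃ A ∈ l, a ∈ A) →
      ∃ P : Set α, MeasurableSet P ∧ P ⊆ D ∧ Unbdd Ω P ∧ ∃ A ∈ l, P ⊆ A := by
  intro l
  induction l with
  | nil =>
    intro _ D _ hD hcov
    exfalso
    obtain ⟨m, v, hf, ht⟩ := hD 0
    have hDempty : D = ∅ := by
      ext a
      simp only [Set.mem_empty_iff_false, iff_false]
      intro haD
      obtain ⟨A, hA, _⟩ := hcov a haD
      exact List.not_mem_nil hA
    rw [hDempty] at hf
    exact ht (trivialOnWith_span_zero hhom v (eq_zero_of_famIn_empty hf) le_rfl)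
  | cons A l ih =>
    intro hmeas D hDmeas hD hcov
    have hAmeas : MeasurableSet A := hmeas A (List.mem_cons_self)
    by_cases hDA : Unbdd Ω (D ∩ A)
    · exact ⟨D ∩ A, hDmeas.inter hAmeas, Set.inter_subset_left, hDA,
        A, List.mem_cons_self, Set.inter_subset_right⟩
    · unfold Unbdd at hDA
      obtain ⟨c₀, hc₀⟩ := not_forall.mp hDA
      set C₀ := max c₀ 0 with hC₀
      have htrivA : ∀ (mm : ℕ) (w : Fin mm → Lp ℝ q μ), FamIn (D ∩ A) w →
          TrivialOnWith Ω (Submodule.span ℝ (Set.range w)) C₀ := by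
        intro mm w hw
        by_contra hcon
        exact hc₀ ⟨mm, w, hw, fun htr =>
          hcon (trivialOnWith_mono htr (le_max_left _ _))⟩
      have hDnA : Unbdd Ω (D \ A) := by
        intro c
        set c' := max c 0 with hc'
        obtain ⟨m, v, hf, ht⟩ := hD (C₀ + c' + 2 * Q)
        have hfA : FamIn (D ∩ A) (fun i => res A hAmeas (v i)) := famIn_res hf A hAmeas
        have htA := htrivA _ _ hfA
        have hfAc : FamIn (D \ A) (fun i => res Aᶜ hAmeas.compl (v i)) := by
          have := famIn_res hf Aᶜ hAmeas.compl
          exact this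
        refine bad_anti_const (le_max_left c 0) ⟨m, fun i => res Aᶜ hAmeas.compl (v i), hfAc, ?_⟩
        intro htAc
        exact ht (combine hhom Q hQ0 hq v A hAmeas (le_max_right c₀ 0) (le_max_right c 0)
          htA htAc)
      have hcov' : ∀ a ∈ D \ A, ∃ B ∈ l, a ∈ B := by
        intro a ha
        obtain ⟨B, hB, haB⟩ := hcov a ha.1
        rcases List.mem_cons.mp hB with rfl | hB
        · exact absurd haB ha.2
        · exact ⟨B, hB, haB⟩
      obtain ⟨P, hPmeas, hPsub, hPu, B, hBl, hPB⟩ :=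
        ih (fun B hB => hmeas B (List.mem_cons_of_mem A hB))
          (D \ A) (hDmeas.diff hAmeas) hDnA hcov'
      exact ⟨P, hPmeas, hPsub.trans Set.diff_subset, hPu, B, List.mem_cons_of_mem A hBl, hPB⟩

theorem q_ne_zero : q ≠ 0 := by
  have h := (Fact.out : (1:ℝ≥0∞) ≤ q)
  intro hq
  rw [hq] at h
  simp at h

theorem p_pos (hqt : q ≠ ∞) : 0 < q.toReal :=
  ENNReal.toReal_pos (q_ne_zero (q := q)) hqt

theorem lintegral_rpow_lt_top (hqt : q ≠ ∞) (f : Lp ℝ q μ) :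
    ∫⁻ a, (‖f a‖₊ : ℝ≥0∞) ^ q.toReal ∂μ < ∞ := by
  have h := Lp.eLpNorm_lt_top f
  simp only [eLpNorm_eq_lintegral_rpow_enorm_toReal (q_ne_zero (q := q)) hqt, enorm_eq_nnnorm] at h
  have hp : 0 < q.toReal := p_pos (q := q) hqt
  by_contra hcon
  push_neg at hcon
  have htop : ∫⁻ a, (‖f a‖₊ : ℝ≥0∞) ^ q.toReal ∂μ = ∞ := top_le_iff.mp hcon
  rw [htop, ENNReal.top_rpow_of_pos (by positivity)] at h
  exact lt_irrefl _ h

theorem aemeas_rpow (hqt : q ≠ ∞) (f : Lp ℝ q μ) :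
    AEMeasurable (fun a => (‖f a‖₊ : ℝ≥0∞) ^ q.toReal) μ := by
  have h1 : AEMeasurable (fun a => (‖f a‖₊ : ℝ≥0∞)) μ :=
    (Lp.aestronglyMeasurable f).enorm
  exact h1.pow_const _

theorem norm_res_le_of_lintegral (hqt : q ≠ ∞) (f : Lp ℝ q μ) {D : Set α}
    (hD : MeasurableSet D) {δ : ℝ} (hδ : 0 < δ)
    (h : ∫⁻ a in D, (‖f a‖₊ : ℝ≥0∞) ^ q.toReal ∂μ ≤ ENNReal.ofReal δ ^ q.toReal) :
    ‖res D hD f‖ ≤ δ := by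
  have hp : 0 < q.toReal := p_pos (q := q) hqt
  rw [Lp.norm_def, eLpNorm_congr_ae (res_coeFn D hD f),
    eLpNorm_eq_lintegral_rpow_enorm_toReal (q_ne_zero (q := q)) hqt]; simp only [enorm_eq_nnnorm]
  have hpt : ∫⁻ a, (‖D.indicator (⇑f) a‖₊ : ℝ≥0∞) ^ q.toReal ∂μ
      = ∫⁻ a in D, (‖f a‖₊ : ℝ≥0∞) ^ q.toReal ∂μ := by
    rw [← lintegral_indicator hD]
    congr 1
    ext a
    rcases Classical.em (a ∈ D) with ha | ha
    · simp [Set.indicator_of_mem ha]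
    · simp [Set.indicator_of_notMem ha, ENNReal.zero_rpow_of_pos hp]
  rw [hpt]
  have hle : (∫⁻ a in D, (‖f a‖₊ : ℝ≥0∞) ^ q.toReal ∂μ) ^ (1 / q.toReal)
      ≤ (ENNReal.ofReal δ ^ q.toReal) ^ (1 / q.toReal) :=
    ENNReal.rpow_le_rpow h (by positivity)
  have heq : (ENNReal.ofReal δ ^ q.toReal) ^ (1 / q.toReal) = ENNReal.ofReal δ := by
    rw [← ENNReal.rpow_mul, mul_one_div, div_self hp.ne', ENNReal.rpow_one]
  rw [heq] at hle
  have hfin := ENNReal.toReal_mono ENNReal.ofReal_ne_top hle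
  rw [ENNReal.toReal_ofReal hδ.le] at hfin
  exact hfin

theorem exists_meas_supp (f : Lp ℝ q μ) : ∃ b : Set α, MeasurableSet b ∧
    ∀ᵐ a ∂μ, (a ∈ b → f a ≠ 0) ∧ (a ∉ b → f a = 0) := by
  have hf := Lp.aestronglyMeasurable f
  have hm : Measurable (hf.mk f) := hf.stronglyMeasurable_mk.measurable
  refine ⟨{a | hf.mk f a ≠ 0}, hm ((measurableSet_singleton 0).compl), ?_⟩
  filter_upwards [hf.ae_eq_mk] with a ha
  constructor
  · intro hb
    rw [ha]
    exact hb
  · intro hb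
    rw [ha]
    simpa using hb

theorem concentrate (hhom : ∀ (c : ℝ) (x : Lp ℝ q μ), Ω (c • x) = c • Ω x)
    (Q : ℝ) (hQ0 : 0 ≤ Q)
    (hq : ∀ x y : Lp ℝ q μ, ‖Ω (x + y) - Ω x - Ω y‖ ≤ Q * (‖x‖ + ‖y‖))
    (hqt : q ≠ ∞) (T : Set α) (hT : MeasurableSet T) (hTu : Unbdd Ω T)
    {n : ℕ} (e : Fin n → Lp ℝ q μ) (δ : ℝ) (hδ : 0 < δ) :
    ∃ (T' : Set α) (hT' : MeasurableSet T'), T' ⊆ T ∧ Unbdd Ω T' ∧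
      ∀ j, ‖res T' hT' (e j)‖ ≤ δ := by
  classical
  set p := q.toReal with hp
  have hppos : 0 < p := p_pos (q := q) hqt
  set mass : Set α → ℝ≥0∞ :=
    fun D => ∫⁻ a in D, (∑ j, (‖e j a‖₊ : ℝ≥0∞) ^ p) ∂μ with hmass
  have hmass_mono : ∀ {D D' : Set α}, D ⊆ D' → mass D ≤ mass D' :=
    fun h => lintegral_mono_set h
  have hmassT : mass T < ∞ := by
    have h1 : mass T ≤ ∫⁻ a, (∑ j, (‖e j a‖₊ : ℝ≥0∞) ^ p) ∂μ :=
      lintegral_mono' Measure.restrict_le_self le_rfl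
    have h2 : ∫⁻ a, (∑ j, (‖e j a‖₊ : ℝ≥0∞) ^ p) ∂μ
        = ∑ j, ∫⁻ a, (‖e j a‖₊ : ℝ≥0∞) ^ p ∂μ :=
      lintegral_finset_sum' Finset.univ (fun j _ => aemeas_rpow hqt (e j))
    refine lt_of_le_of_lt h1 ?_
    rw [h2]
    exact ENNReal.sum_lt_top.mpr fun j _ => lintegral_rpow_lt_top hqt (e j)
  set Sgood : Set (Set α) := {D | D ⊆ T ∧ MeasurableSet D ∧ Unbdd Ω D} with hSgood
  have hTgood : T ∈ Sgood := ⟨subset_rfl, hT, hTu⟩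
  set mstar := ⨅ (D : Set α) (_ : D ∈ Sgood), mass D with hmstar
  have hm_le : ∀ D ∈ Sgood, mstar ≤ mass D := fun D hD => iInf₂_le D hD
  have hm_top : mstar < ∞ := lt_of_le_of_lt (hm_le T hTgood) hmassT
  have hex : ∀ ξ : ℝ≥0∞, mstar < ξ → ∃ D ∈ Sgood, mass D < ξ := by
    intro ξ hξ
    by_contra hcon
    push_neg at hcon
    exact absurd (lt_of_le_of_lt (le_iInf₂ hcon) hξ) (lt_irrefl _)
  -- Key step: arbitrarily bad families on sets of arbitrarily small mass.
  have Hstep : ∀ (c : ℝ) (ξ : ℝ≥0∞), 0 < ξ → ∃ W : Set α, MeasurableSet W ∧ W ⊆ T ∧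
      mass W < ξ ∧ Bad Ω W c := by
    intro c ξ hξ
    obtain ⟨D, hDgood, hDmass⟩ := hex (mstar + ξ)
      (ENNReal.lt_add_right hm_top.ne hξ.ne')
    obtain ⟨hDsub, hDmeas, hDu⟩ := hDgood
    obtain ⟨r, v', hf, ht⟩ := hDu (max c 0 + 2 * Q)
    -- measurable supports
    have hbs := fun i => exists_meas_supp (v' i)
    choose b hbmeas hbprop using hbs
    -- cover of D
    set l : List (Set α) := (List.ofFn fun i : Fin r => b i ∩ D) ++ [D \ ⋃ i, b i] with hl
    have hlmeas : ∀ A ∈ l, MeasurableSet A := by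
      intro A hA
      rcases List.mem_append.mp hA with hA | hA
      · obtain ⟨i, rfl⟩ := List.mem_ofFn.mp hA
        exact (hbmeas i).inter hDmeas
      · rw [List.mem_singleton.mp hA]
        exact hDmeas.diff (MeasurableSet.iUnion hbmeas)
    have hcov : ∀ a ∈ D, ∃ A ∈ l, a ∈ A := by
      intro a ha
      by_cases hex2 : ∃ i, a ∈ b i
      · obtain ⟨i, hi⟩ := hex2
        exact ⟨b i ∩ D, List.mem_append.mpr (Or.inl (List.mem_ofFn.mpr ⟨i, rfl⟩)),
          hi, ha⟩
      · refine ⟨D \ ⋃ i, b i, List.mem_append.mpr (Or.inr (List.mem_singleton.mpr rfl)), ha, ?_⟩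
        intro hmem
        obtain ⟨s, ⟨i, rfl⟩, hs⟩ := hmem
        exact hex2 ⟨i, hs⟩
    obtain ⟨P, hPmeas, hPsub, hPu, A, hAl, hPA⟩ :=
      unbdd_cover hhom Q hQ0 hq l hlmeas D hDmeas hDu hcov
    have hPgood : P ∈ Sgood := ⟨hPsub.trans hDsub, hPmeas, hPu⟩
    set W := D \ P with hW
    have hWmeas : MeasurableSet W := hDmeas.diff hPmeas
    -- mass of W is small
    have hmassW : mass W < ξ := by
      have hun : P ∪ W = D := Set.union_diff_cancel hPsub
      have hdisj : Disjoint P W := Set.disjoint_sdiff_right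
      have hadd : mass P + mass W = mass D := by
        rw [← lintegral_union hWmeas hdisj, hun]
      have hchain : mstar + mass W ≤ mass P + mass W :=
        add_le_add (hm_le P hPgood) le_rfl
      rw [hadd] at hchain
      have := lt_of_le_of_lt hchain hDmass
      exact (ENNReal.add_lt_add_iff_left hm_top.ne).mp this
    -- the restricted family is bad on W
    set X : Fin r → Lp ℝ q μ := fun i => res Pᶜ hPmeas.compl (v' i) with hX
    have hfX : FamIn W X := by
      have := famIn_res hf Pᶜ hPmeas.compl
      rwa [← Set.diff_eq] at this
    -- triviality of the P-part with constant 0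
    have htrivP : TrivialOnWith Ω
        (Submodule.span ℝ (Set.range fun i => res P hPmeas (v' i))) 0 := by
      rcases List.mem_append.mp hAl with hAof | hArest
      · obtain ⟨j, rfl⟩ := List.mem_ofFn.mp hAof
        -- P ⊆ b j ∩ D : all other components vanish on P
        have hzero : ∀ i, i ≠ j → res P hPmeas (v' i) = 0 := by
          intro i hij
          refine res_eq_zero P hPmeas (v' i) ?_
          have hnull := hf.2 hij
          filter_upwards [hnull, hbprop i, hbprop j] with a hd hi hj haP
          have habj : a ∈ b j := (hPA haP).1
          rcases hd with hd | hd
          · exact hd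
          · by_contra hne
            exact (hj.1 habj) hd
        have hsub : Submodule.span ℝ (Set.range fun i => res P hPmeas (v' i)) ≤
            Submodule.span ℝ {res P hPmeas (v' j)} := by
          refine Submodule.span_le.mpr ?_
          rintro x ⟨i, rfl⟩
          by_cases hij : i = j
          · subst hij
            exact Submodule.subset_span rfl
          · have hz : (fun i => res P hPmeas (v' i)) i = 0 := hzero i hij
            rw [hz]
            exact Submodule.zero_mem _
        exact trivialOnWith_of_le hsub (trivialOnWith_span_singleton hhom _)
      · rw [List.mem_singleton.mp hArest] at hPA
        have hzero : ∀ i, res P hPmeas (v' i) = 0 := by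
          intro i
          refine res_eq_zero P hPmeas (v' i) ?_
          filter_upwards [hbprop i] with a hi haP
          have : a ∉ b i := fun hmem => (hPA haP).2 ⟨b i, ⟨i, rfl⟩, hmem⟩
          exact hi.2 this
        exact trivialOnWith_span_zero hhom _ hzero le_rfl
    refine ⟨W, hWmeas, Set.diff_subset.trans hDsub, hmassW,
      bad_anti_const (le_max_left c 0) ⟨r, X, hfX, fun htr => ?_⟩⟩
    have := combine hhom Q hQ0 hq v' P hPmeas le_rfl (le_max_right c 0) htrivP htr
    exact ht (trivialOnWith_mono this (le_of_eq (by ring)))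
  -- mstar must vanish
  have hm0 : mstar = 0 := by
    by_contra hm0
    have hm0' : 0 < mstar := pos_iff_ne_zero.mpr hm0
    have hWs : ∀ k : ℕ, ∃ W : Set α, MeasurableSet W ∧ W ⊆ T ∧
        mass W < mstar / 2 ^ (k + 2) ∧ Bad Ω W k :=
      fun k => Hstep k (mstar / 2 ^ (k + 2))
        (ENNReal.div_pos hm0 (by
          exact (ENNReal.pow_ne_top (by norm_num : (2:ℝ≥0∞) ≠ ∞))))
    choose W hWmeas hWsub hWmass hWbad using hWs
    set U := ⋃ k, W k with hU
    have hUgood : U ∈ Sgood := by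
      refine ⟨Set.iUnion_subset hWsub, MeasurableSet.iUnion hWmeas, fun c => ?_⟩
      refine bad_anti_const (le_trans (le_max_left c 0) (Nat.le_ceil _))
        (bad_mono_set (Set.subset_iUnion W ⌈max c 0⌉₊) ?_)
      exact hWbad _
    have hUmass : mass U ≤ mstar / 2 := by
      have h1 : mass U ≤ ∑' k, mass (W k) := lintegral_iUnion_le _ _
      have h2 : ∑' k, mass (W k) ≤ ∑' k : ℕ, mstar / 2 ^ (k + 2) :=
        ENNReal.tsum_le_tsum fun k => (hWmass k).le
      have h3 : ∑' k : ℕ, mstar / 2 ^ (k + 2) = mstar / 2 := by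
        have hterm : ∀ k : ℕ, mstar / 2 ^ (k + 2) = mstar / 4 * 2⁻¹ ^ k := by
          intro k
          have h2k : (2:ℝ≥0∞) ^ (k + 2) = 2 ^ k * 4 := by
            rw [pow_add]
            norm_num
          rw [div_eq_mul_inv, div_eq_mul_inv, h2k,
            ENNReal.mul_inv (Or.inl (pow_ne_zero k (by norm_num))) (Or.inr (by norm_num)),
            ← ENNReal.inv_pow]
          ring
        rw [tsum_congr hterm, ENNReal.tsum_mul_left, ENNReal.tsum_geometric,
          ENNReal.one_sub_inv_two, inv_inv]
        have h4 : ((2:ℝ≥0∞)⁻¹ * 2⁻¹) * 2 = 2⁻¹ := by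
          rw [mul_assoc, ENNReal.inv_mul_cancel (by norm_num) (by norm_num), mul_one]
        rw [div_eq_mul_inv, div_eq_mul_inv, show (4:ℝ≥0∞) = 2 * 2 by norm_num,
          ENNReal.mul_inv (Or.inl (by norm_num)) (Or.inr (by norm_num))]
        calc mstar * (2⁻¹ * 2⁻¹) * 2 = mstar * ((2⁻¹ * 2⁻¹) * 2) := by ring
          _ = mstar * 2⁻¹ := by rw [h4]
      rw [← h3]
      exact le_trans h1 h2
    have : mstar ≤ mstar / 2 := le_trans (hm_le U hUgood) hUmass
    exact absurd (lt_of_le_of_lt this (ENNReal.half_lt_self hm0 hm_top.ne))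
      (lt_irrefl _)
  -- extract a small set
  set εp := ENNReal.ofReal δ ^ p with hεp
  have hεppos : 0 < εp := by
    refine ENNReal.rpow_pos ?_ ?_
    · exact ENNReal.ofReal_pos.mpr hδ
    · exact ENNReal.ofReal_ne_top
  obtain ⟨D, hDgood, hDmass⟩ := hex εp (by rw [hm0]; exact hεppos)
  refine ⟨D, hDgood.2.1, hDgood.1, hDgood.2.2, fun j => ?_⟩
  refine norm_res_le_of_lintegral hqt (e j) hDgood.2.1 hδ ?_
  refine le_trans ?_ hDmass.le
  refine lintegral_mono fun a => ?_
  exact Finset.single_le_sum (f := fun j => (‖e j a‖₊ : ℝ≥0∞) ^ p)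
    (fun i _ => zero_le) (Finset.mem_univ j)

theorem coeFn_sum_ae {ι : Type*} (t : Finset ι) (g : ι → Lp ℝ q μ) :
    ⇑(∑ i ∈ t, g i) =ᵐ[μ] fun a => ∑ i ∈ t, g i a := by
  classical
  induction t using Finset.induction_on with
  | empty =>
    filter_upwards [Lp.coeFn_zero (E := ℝ) (p := q) (μ := μ)] with a ha
    simpa using ha
  | @insert i t hi ih =>
    rw [Finset.sum_insert hi]
    filter_upwards [Lp.coeFn_add (g i) (∑ j ∈ t, g j), ih] with a h1 h2
    rw [h1, Pi.add_apply, h2]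
    simp [Finset.sum_insert hi]

theorem simple_approx (hqt : q ≠ ∞) (F : Submodule ℝ (Lp ℝ q μ)) [FiniteDimensional ℝ F]
    {ε : ℝ} (hε : 0 < ε) :
    ∃ (m : ℕ) (w : Fin m → Lp ℝ q μ) (T : F →ₗ[ℝ] Lp ℝ q μ),
      FamIn (Set.univ : Set α) w ∧
      (∀ x : F, T x ∈ Submodule.span ℝ (Set.range w)) ∧
      (∀ x : F, ‖T x - (x : Lp ℝ q μ)‖ ≤ ε * ‖x‖) := by
  classical
  obtain ⟨nn, b, K, hK0, hK⟩ := coord_bound F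
  have hchoice : ∀ i : Fin nn, ∃ s : Lp.simpleFunc ℝ q μ,
      ‖(s : Lp ℝ q μ) - (b i : Lp ℝ q μ)‖ ≤ ε / ((nn + 1) * (K i + 1)) := by
    intro i
    have hKi := hK0 i
    have hpos : 0 < ε / ((nn + 1) * (K i + 1)) := by positivity
    obtain ⟨s, hs⟩ := (Lp.simpleFunc.denseRange (E := ℝ) (μ := μ) (p := q) hqt).exists_dist_lt
      ((b i : Lp ℝ q μ)) hpos
    refine ⟨s, ?_⟩
    rw [dist_comm, dist_eq_norm] at hs
    exact hs.le
  choose s hs using hchoice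
  set f : Fin nn → SimpleFunc α ℝ := fun i => Lp.simpleFunc.toSimpleFunc (s i) with hf
  have hfeq : ∀ i, ⇑(f i) =ᵐ[μ] ⇑((s i : Lp ℝ q μ)) := fun i =>
    Lp.simpleFunc.toSimpleFunc_eq_toFun (s i)
  have hfmem : ∀ i, MemLp (f i) q μ := fun i => Lp.simpleFunc.memLp (s i)
  set Z : Finset (Fin nn → ℝ) :=
    (Fintype.piFinset fun i => (f i).range).filter (· ≠ 0) with hZ
  set cell : (Fin nn → ℝ) → Set α := fun y => ⋂ i, (f i) ⁻¹' {y i} with hcell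
  have hcellmeas : ∀ y, MeasurableSet (cell y) := fun y =>
    MeasurableSet.iInter fun i => (f i).measurableSet_fiber _
  have hcellfin : ∀ y, y ∈ Z → μ (cell y) < ∞ := by
    intro y hy
    obtain ⟨hyp, hyne⟩ := Finset.mem_filter.mp hy
    obtain ⟨i₀, hi₀⟩ := Function.ne_iff.mp hyne
    refine lt_of_le_of_lt (measure_mono ?_)
      (SimpleFunc.measure_preimage_lt_top_of_memLp (q_ne_zero (q := q)) hqt (f i₀)
        (hfmem i₀) (y i₀) hi₀)
    exact Set.iInter_subset _ i₀
  set I := {y : Fin nn → ℝ // y ∈ Z} with hI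
  set w0 : I → Lp ℝ q μ := fun y =>
    indicatorConstLp q (hcellmeas y.1) (hcellfin y.1 y.2).ne (1 : ℝ) with hw0
  have hw0coe : ∀ᵐ a ∂μ, ∀ y : I, (w0 y) a = (cell y.1).indicator (fun _ => (1:ℝ)) a :=
    (ae_all_iff).mpr fun y => indicatorConstLp_coeFn
  -- pointwise identity
  have hpoint : ∀ (i : Fin nn) (a : α),
      f i a = ∑ y : I, y.1 i * (cell y.1).indicator (fun _ => (1:ℝ)) a := by
    intro i a
    set y₀ : Fin nn → ℝ := fun j => f j a with hy₀def
    have hmem_cell : ∀ y : I, a ∈ cell y.1 → y.1 = y₀ := by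
      intro y hy
      funext j
      have := Set.mem_iInter.mp hy j
      rw [Set.mem_preimage, Set.mem_singleton_iff] at this
      rw [hy₀def]
      exact this.symm
    by_cases hy₀ : y₀ = 0
    · have hfi : f i a = 0 := by
        have := congrFun hy₀ i
        exact this
      rw [hfi]
      symm
      refine Finset.sum_eq_zero fun y _ => ?_
      rcases Classical.em (a ∈ cell y.1) with ha | ha
      · exfalso
        have h1 := hmem_cell y ha
        have h2 := (Finset.mem_filter.mp y.2).2
        rw [h1, hy₀] at h2
        exact h2 rfl
      · rw [Set.indicator_of_notMem ha, mul_zero]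
    · have hy₀Z : y₀ ∈ Z := by
        refine Finset.mem_filter.mpr ⟨Fintype.mem_piFinset.mpr fun j => ?_, hy₀⟩
        exact SimpleFunc.mem_range_self _ a
      have ha₀ : a ∈ cell y₀ := by
        refine Set.mem_iInter.mpr fun j => ?_
        rw [Set.mem_preimage, Set.mem_singleton_iff]
      have hside : ∀ y ∈ Finset.univ, y ≠ (⟨y₀, hy₀Z⟩ : I) →
          y.1 i * (cell y.1).indicator (fun _ => (1:ℝ)) a = 0 := by
        intro y _ hyne
        rcases Classical.em (a ∈ cell y.1) with ha | ha
        · exact absurd (Subtype.ext (hmem_cell y ha)) hyne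
        · rw [Set.indicator_of_notMem ha, mul_zero]
      rw [Finset.sum_eq_single_of_mem (⟨y₀, hy₀Z⟩ : I) (Finset.mem_univ _) hside,
        Set.indicator_of_mem ha₀, mul_one]
  -- s i belongs to the span of the indicators
  have hkey : ∀ i, ((s i : Lp ℝ q μ)) = ∑ y : I, (y.1 i) • w0 y := by
    intro i
    refine Lp.ext ?_
    have hsmul : ∀ᵐ a ∂μ, ∀ y : I, ((y.1 i) • w0 y) a = (y.1 i) • ((w0 y) a) :=
      (ae_all_iff).mpr fun y => Lp.coeFn_smul _ _
    filter_upwards [coeFn_sum_ae Finset.univ (fun y : I => (y.1 i) • w0 y),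
      hw0coe, (hfeq i).symm, hsmul] with a h1 h2 h3 h4
    rw [h1]
    have : ∑ y : I, ((y.1 i) • w0 y) a = ∑ y : I, y.1 i * (cell y.1).indicator
        (fun _ => (1:ℝ)) a := by
      refine Finset.sum_congr rfl fun y _ => ?_
      rw [h4 y, h2 y, smul_eq_mul]
    rw [this, ← hpoint i a]
    exact h3
  -- the family is disjointly supported
  have hdisj : Pairwise fun (y y' : I) => DisjSupp (w0 y) (w0 y') := by
    intro y y' hyy
    filter_upwards [hw0coe] with a ha
    rcases Classical.em (a ∈ cell y.1) with hmem | hmem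
    · right
      rw [ha y']
      refine Set.indicator_of_notMem (fun hmem' => ?_) _
      apply hyy
      refine Subtype.ext ?_
      funext j
      have h1 := Set.mem_iInter.mp hmem j
      have h2 := Set.mem_iInter.mp hmem' j
      rw [Set.mem_preimage, Set.mem_singleton_iff] at h1 h2
      rw [← h1, ← h2]
    · left
      rw [ha y]
      exact Set.indicator_of_notMem hmem _
  -- reindex to Fin m
  set m := Fintype.card I with hm
  set eI : I ≃ Fin m := Fintype.equivFin I with heI
  set w : Fin m → Lp ℝ q μ := fun k => w0 (eI.symm k) with hwdef
  have hrange : Set.range w = Set.range w0 := Function.Surjective.range_comp eI.symm.surjective w0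
  have hfam : FamIn (Set.univ : Set α) w := by
    constructor
    · intro i
      refine ae_of_all μ fun a ha => absurd (Set.mem_univ a) ha
    · intro k k' hkk
      exact hdisj (fun h => hkk (by rw [← eI.apply_symm_apply k, h, eI.apply_symm_apply]))
  set T : F →ₗ[ℝ] Lp ℝ q μ := ∑ i, LinearMap.smulRight (b.coord i) ((s i : Lp ℝ q μ)) with hT
  have hTx : ∀ x : F, T x = ∑ i, b.repr x i • ((s i : Lp ℝ q μ)) := by
    intro x
    rw [hT, LinearMap.sum_apply]
    exact Finset.sum_congr rfl fun i _ => by rw [LinearMap.smulRight_apply, Module.Basis.coord_apply]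
  refine ⟨m, w, T, hfam, fun x => ?_, fun x => ?_⟩
  · rw [hTx x]
    refine Submodule.sum_mem _ fun i _ => Submodule.smul_mem _ _ ?_
    rw [hkey i]
    refine Submodule.sum_mem _ fun y _ => Submodule.smul_mem _ _ ?_
    rw [hrange]
    exact Submodule.subset_span ⟨y, rfl⟩
  · have hxcoe : (x : Lp ℝ q μ) = ∑ i, b.repr x i • ((b i : F) : Lp ℝ q μ) := by
      have h0 := congrArg (F.subtype) (b.sum_repr x)
      rw [map_sum] at h0
      simp only [LinearMap.map_smul, Submodule.coe_subtype] at h0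
      exact h0.symm
    rw [hTx x, hxcoe, ← Finset.sum_sub_distrib]
    have hterm : ∀ i ∈ Finset.univ, ‖b.repr x i • ((s i : Lp ℝ q μ)) -
        b.repr x i • ((b i : F) : Lp ℝ q μ)‖ ≤ (ε / (nn + 1)) * ‖x‖ := by
      intro i _
      rw [← smul_sub, norm_smul, Real.norm_eq_abs]
      have h1 := hK i x
      have h2 := hs i
      have hKi := hK0 i
      have hnn : (0:ℝ) < nn + 1 := by positivity
      have hKi1 : (0:ℝ) < K i + 1 := by linarith
      have hb1 : |b.repr x i| * ‖(s i : Lp ℝ q μ) - ((b i : F) : Lp ℝ q μ)‖ ≤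
          (K i * ‖x‖) * (ε / ((nn + 1) * (K i + 1))) :=
        mul_le_mul h1 h2 (norm_nonneg _) (mul_nonneg hKi (norm_nonneg _))
      refine hb1.trans ?_
      have heq2 : (K i * ‖x‖) * (ε / ((nn + 1) * (K i + 1))) =
          (K i / (K i + 1)) * ((ε / (nn + 1)) * ‖x‖) := by
        field_simp
      rw [heq2]
      have hfrac : K i / (K i + 1) ≤ 1 := by
        rw [div_le_one hKi1]
        linarith
      have hpos2 : 0 ≤ (ε / (nn + 1)) * ‖x‖ :=
        mul_nonneg (div_nonneg hε.le hnn.le) (norm_nonneg _)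
      nlinarith
    refine (norm_sum_le _ _).trans ?_
    refine (Finset.sum_le_sum hterm).trans ?_
    rw [Finset.sum_const, Finset.card_univ, Fintype.card_fin, nsmul_eq_mul]
    have hnn : (0:ℝ) < nn + 1 := by positivity
    have hx0 : (0:ℝ) ≤ ‖x‖ := norm_nonneg _
    have hdiv : (nn : ℝ) * (ε / (nn + 1)) ≤ ε := by
      rw [← mul_div_assoc, div_le_iff₀ hnn]
      nlinarith
    nlinarith [div_nonneg hε.le hnn.le]

theorem unbdd_univ (hqt : q ≠ ∞)
    (hhom : ∀ (c : ℝ) (x : Lp ℝ q μ), Ω (c • x) = c • Ω x)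
    (Q : ℝ) (hQ0 : 0 ≤ Q)
    (hq : ∀ x y : Lp ℝ q μ, ‖Ω (x + y) - Ω x - Ω y‖ ≤ Q * (‖x‖ + ‖y‖))
    (hnt : ¬ LocallyTrivial Ω) : Unbdd Ω (Set.univ : Set α) := by
  intro c
  set C := max c 0 with hC
  have hC0 : 0 ≤ C := le_max_right c 0
  have hnt' : ∃ F : Submodule ℝ (Lp ℝ q μ), FiniteDimensional ℝ F ∧
      ¬ TrivialOnWith Ω F (C + 3 * Q + 3) := by
    by_contra h
    push_neg at h
    exact hnt ⟨C + 3 * Q + 3, by linarith, fun F hF => h F hF⟩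
  obtain ⟨F, hFfin, hFbad⟩ := hnt'
  haveI := hFfin
  obtain ⟨ε₀, hε₀pos, hperturb⟩ := lemPerturb hhom Q hQ0 hq F C hC0
  obtain ⟨m, w, T, hfam, hmemspan, happrox⟩ := simple_approx hqt F hε₀pos
  have hbadrange := hperturb T happrox hFbad
  refine bad_anti_const (le_max_left c 0) ⟨m, w, hfam, fun htr => ?_⟩
  refine hbadrange (trivialOnWith_of_le ?_ htr)
  rintro z ⟨x, rfl⟩
  exact hmemspan x

theorem step (hqt : q ≠ ∞)
    (hhom : ∀ (c : ℝ) (x : Lp ℝ q μ), Ω (c • x) = c • Ω x)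
    (Q : ℝ) (hQ0 : 0 ≤ Q)
    (hq : ∀ x y : Lp ℝ q μ, ‖Ω (x + y) - Ω x - Ω y‖ ≤ Q * (‖x‖ + ‖y‖))
    (R : Set α) (hR : MeasurableSet R) (hRu : Unbdd Ω R) (k : ℕ) :
    ∃ t : (Set α) × (Σ m : ℕ, Fin m → Lp ℝ q μ),
      MeasurableSet t.1 ∧ t.1 ⊆ R ∧ Unbdd Ω t.1 ∧
      (∀ i, ∀ᵐ a ∂μ, a ∉ R \ t.1 → t.2.2 i a = 0) ∧
      (Pairwise fun i j => DisjSupp (t.2.2 i) (t.2.2 j)) ∧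
      ¬ TrivialOnWith Ω (Submodule.span ℝ (Set.range t.2.2)) k := by
  obtain ⟨r, v, hfam, hbad⟩ := hRu ((k : ℝ) + 3 * Q + 3)
  set G := Submodule.span ℝ (Set.range v) with hG
  haveI : FiniteDimensional ℝ G := FiniteDimensional.span_of_finite ℝ (Set.finite_range v)
  obtain ⟨ε₀, hε₀pos, hperturb⟩ := lemPerturb hhom Q hQ0 hq G (k : ℝ) (Nat.cast_nonneg k)
  obtain ⟨nb, bb, K, hK0, hKb⟩ := coord_bound G
  set KS := ∑ i, K i with hKS
  have hKS0 : 0 ≤ KS := Finset.sum_nonneg fun i _ => hK0 i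
  set δ := ε₀ / (KS + 1) with hδ
  have hδpos : 0 < δ := by positivity
  obtain ⟨R', hR'meas, hR'sub, hR'u, hR'small⟩ := concentrate hhom Q hQ0 hq hqt R hR hRu
    (fun i => ((bb i : G) : Lp ℝ q μ)) δ hδpos
  set T : G →ₗ[ℝ] Lp ℝ q μ := (res R'ᶜ hR'meas.compl).comp G.subtype with hT
  have hTbound : ∀ x : G, ‖T x - (x : Lp ℝ q μ)‖ ≤ ε₀ * ‖x‖ := by
    intro x
    have hsplit := res_add_compl R' hR'meas ((x : Lp ℝ q μ))
    have h2 : res R' hR'meas (x : Lp ℝ q μ) + T x = (x : Lp ℝ q μ) := hsplit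
    have h1 : T x - (x : Lp ℝ q μ) = - res R' hR'meas (x : Lp ℝ q μ) := by
      calc T x - (x : Lp ℝ q μ)
          = T x - (res R' hR'meas (x : Lp ℝ q μ) + T x) := by rw [h2]
        _ = - res R' hR'meas (x : Lp ℝ q μ) := by abel
    rw [h1, norm_neg]
    have hxsum : (x : Lp ℝ q μ) = ∑ i, bb.repr x i • ((bb i : G) : Lp ℝ q μ) := by
      have h0 := congrArg (G.subtype) (bb.sum_repr x)
      rw [map_sum] at h0
      simp only [LinearMap.map_smul, Submodule.coe_subtype] at h0
      exact h0.symm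
    rw [hxsum, map_sum]
    refine (norm_sum_le _ _).trans ?_
    have hterm : ∀ i ∈ Finset.univ, ‖res R' hR'meas (bb.repr x i • ((bb i : G) : Lp ℝ q μ))‖
        ≤ K i * ‖x‖ * δ := by
      intro i _
      rw [LinearMap.map_smul, norm_smul, Real.norm_eq_abs]
      have h2 := hR'small i
      have h3 := hKb i x
      have h4 : (0:ℝ) ≤ |bb.repr x i| := abs_nonneg _
      have h5 : (0:ℝ) ≤ ‖res R' hR'meas ((bb i : G) : Lp ℝ q μ)‖ := norm_nonneg _
      have h6 : (0:ℝ) ≤ K i * ‖x‖ := mul_nonneg (hK0 i) (norm_nonneg _)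
      exact mul_le_mul h3 h2 h5 h6
    refine (Finset.sum_le_sum hterm).trans ?_
    have hsum : ∑ i, K i * ‖x‖ * δ = KS * ‖x‖ * δ := by
      rw [hKS, Finset.sum_mul, Finset.sum_mul]
    rw [hsum]
    have hδKS : KS * δ ≤ ε₀ := by
      rw [hδ, ← mul_div_assoc, div_le_iff₀ (by positivity : (0:ℝ) < KS + 1)]
      nlinarith
    nlinarith [norm_nonneg x, mul_nonneg hKS0 hδpos.le]
  have hbadrange := hperturb T hTbound hbad
  refine ⟨⟨R', ⟨r, fun i => res R'ᶜ hR'meas.compl (v i)⟩⟩, hR'meas, hR'sub, hR'u, ?_, ?_, ?_⟩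
  · intro i
    filter_upwards [res_coeFn R'ᶜ hR'meas.compl (v i), hfam.1 i] with a h1 h2 ha
    rw [h1]
    rcases Classical.em (a ∈ R'ᶜ) with hmem | hmem
    · rw [Set.indicator_of_mem hmem]
      exact h2 fun haR => ha ⟨haR, hmem⟩
    · exact Set.indicator_of_notMem hmem _
  · exact (famIn_res hfam R'ᶜ hR'meas.compl).2
  · intro htr
    refine hbadrange (trivialOnWith_of_le ?_ htr)
    rintro z ⟨x, rfl⟩
    exact mem_span_res v R'ᶜ hR'meas.compl _ x.2

end LpCtx

end QLAux

open QLAux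

/-- If a quasi-linear map `Ω` on `L_p(μ)` (`σ`-finite, `1 ≤ p < ∞`) with
values in a Banach space is not locally trivial, then there is a normalized sequence of
pairwise disjointly supported functions such that the restriction of `Ω` to their closed
linear span (a copy of `ℓ_p`) is not locally trivial. -/
theorem exists_disjoint_sequence_not_locallyTrivial
    {α : Type*} [MeasurableSpace α] {μ : Measure α} [SigmaFinite μ]
    {q : ℝ≥0∞} [Fact (1 ≤ q)] (hq : q ≠ ∞)
    {Y : Type*} [NormedAddCommGroup Y] [NormedSpace ℝ Y] [CompleteSpace Y]
    (Ω : Lp ℝ q μ → Y) (hΩ : IsQuasiLinear Ω)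
    (hnt : ¬ LocallyTrivial Ω) :
    ∃ u : ℕ → Lp ℝ q μ, (∀ n, ‖u n‖ = 1) ∧
      Pairwise (fun i j => DisjSupp (u i) (u j)) ∧
      ¬ LocallyTrivialOn Ω (Submodule.span ℝ (Set.range u)).topologicalClosure := by
  classical
  obtain ⟨hhom, Q, hQ0, hq'⟩ := hΩ
  have hstep := fun (R : Set α) (hR : MeasurableSet R) (hRu : Unbdd Ω R) (k : ℕ) =>
    QLAux.step hq hhom Q hQ0 hq' R hR hRu k
  choose stepf hstep1 hstep2 hstep3 hstep4 hstep5 hstep6 using hstep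
  have huniv : MeasurableSet (Set.univ : Set α) ∧ Unbdd Ω (Set.univ : Set α) :=
    ⟨MeasurableSet.univ, unbdd_univ hq hhom Q hQ0 hq' hnt⟩
  let St : ℕ → {R : Set α // MeasurableSet R ∧ Unbdd Ω R} := fun k =>
    Nat.rec (motive := fun _ => {R : Set α // MeasurableSet R ∧ Unbdd Ω R})
      ⟨Set.univ, huniv⟩
      (fun k prev => ⟨(stepf prev.1 prev.2.1 prev.2.2 k).1,
        hstep1 prev.1 prev.2.1 prev.2.2 k,
        hstep3 prev.1 prev.2.1 prev.2.2 k⟩) k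
  let fam : ∀ _ : ℕ, Σ m : ℕ, Fin m → Lp ℝ q μ := fun k =>
    (stepf (St k).1 (St k).2.1 (St k).2.2 k).2
  have hStsucc : ∀ k, (St (k+1)).1 = (stepf (St k).1 (St k).2.1 (St k).2.2 k).1 :=
    fun k => rfl
  have hsub : ∀ k, (St (k+1)).1 ⊆ (St k).1 := by
    intro k
    rw [hStsucc k]
    exact hstep2 _ _ _ k
  have hsub' : ∀ k l, k ≤ l → (St l).1 ⊆ (St k).1 := by
    intro k l hkl
    induction hkl with
    | refl => exact subset_rfl
    | step h ih =>
      exact (hsub _).trans ih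
  have hsupp : ∀ k i, ∀ᵐ a ∂μ, a ∉ (St k).1 \ (St (k+1)).1 → (fam k).2 i a = 0 := by
    intro k i
    have h := hstep4 (St k).1 (St k).2.1 (St k).2.2 k i
    rw [hStsucc k]
    exact h
  have hdisj : ∀ k, Pairwise fun i j => DisjSupp ((fam k).2 i) ((fam k).2 j) :=
    fun k => hstep5 _ _ _ k
  have hbad : ∀ k : ℕ, ¬ TrivialOnWith Ω (Submodule.span ℝ (Set.range (fam k).2)) k :=
    fun k => hstep6 _ _ _ k
  let blkfun : ℕ × ℕ → Lp ℝ q μ := fun p =>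
    if h : p.2 < (fam p.1).1 then (fam p.1).2 ⟨p.2, h⟩ else 0
  let S : Set (ℕ × ℕ) := {p | blkfun p ≠ 0}
  have hblk_eq : ∀ (k : ℕ) (i : Fin (fam k).1), blkfun (k, (i : ℕ)) = (fam k).2 i := by
    intro k i
    simp only [blkfun]
    rw [dif_pos i.2]
  have hpick : ∀ k : ℕ, ∃ i : ℕ, (k, i) ∈ S := by
    intro k
    by_contra hc
    push_neg at hc
    refine hbad k (trivialOnWith_span_zero hhom (fam k).2 (fun i => ?_) (Nat.cast_nonneg k))
    have h1 := hc (i : ℕ)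
    simp only [S, Set.mem_setOf_eq, not_not] at h1
    rw [← hblk_eq k i]
    exact h1
  choose pick hpickS using hpick
  have hSinf : S.Infinite := Set.infinite_of_injective_forall_mem
    (f := fun k : ℕ => ((k, pick k) : ℕ × ℕ))
    (fun k l hkl => congrArg Prod.fst hkl) hpickS
  haveI : Infinite ↥S := hSinf.to_subtype
  haveI : Encodable ↥S := Encodable.ofCountable _
  haveI : Denumerable ↥S := Denumerable.ofEncodableOfInfinite _
  let e : ℕ ≃ ↥S := (Denumerable.eqv ↥S).symm
  let u : ℕ → Lp ℝ q μ := fun n => ‖blkfun ((e n) : ℕ × ℕ)‖⁻¹ • blkfun ((e n) : ℕ × ℕ)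
  have hblkne : ∀ n, blkfun ((e n) : ℕ × ℕ) ≠ 0 := fun n => (e n).2
  have hnorm : ∀ n, ‖u n‖ = 1 := by
    intro n
    have h0 : ‖blkfun ((e n) : ℕ × ℕ)‖ ≠ 0 := norm_ne_zero_iff.mpr (hblkne n)
    simp only [u, norm_smul, norm_inv, norm_norm]
    exact inv_mul_cancel₀ h0
  have hlt_of_mem : ∀ p : ℕ × ℕ, p ∈ S → p.2 < (fam p.1).1 := by
    intro p hp
    by_contra h
    refine hp ?_
    show blkfun p = 0
    simp only [blkfun]
    rw [dif_neg h]
  have hcross : ∀ k l : ℕ, k < l → ∀ (i : Fin (fam k).1) (j : Fin (fam l).1),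
      ∀ᵐ a ∂μ, (fam k).2 i a = 0 ∨ (fam l).2 j a = 0 := by
    intro k l hkl i j
    filter_upwards [hsupp k i, hsupp l j] with a h1 h2
    by_cases hz : (fam k).2 i a = 0
    · exact Or.inl hz
    · right
      have ha : a ∈ (St k).1 \ (St (k+1)).1 := by
        by_contra hna
        exact hz (h1 hna)
      refine h2 fun hmem => ?_
      exact ha.2 (hsub' (k+1) l hkl hmem.1)
  have hblkdisj : ∀ p p' : ℕ × ℕ, p ∈ S → p' ∈ S → p ≠ p' →
      (∀ᵐ a ∂μ, blkfun p a = 0 ∨ blkfun p' a = 0) := by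
    rintro ⟨k1, i1⟩ ⟨k2, i2⟩ hp hp' hne
    have hlt := hlt_of_mem _ hp
    have hlt' := hlt_of_mem _ hp'
    have hbp : blkfun (k1, i1) = (fam k1).2 ⟨i1, hlt⟩ := by
      simp only [blkfun]
      rw [dif_pos hlt]
    have hbp' : blkfun (k2, i2) = (fam k2).2 ⟨i2, hlt'⟩ := by
      simp only [blkfun]
      rw [dif_pos hlt']
    rw [hbp, hbp']
    rcases lt_trichotomy k1 k2 with h12 | h12 | h12
    · exact hcross k1 k2 h12 _ _
    · subst h12
      have hij : (⟨i1, hlt⟩ : Fin (fam k1).1) ≠ ⟨i2, hlt'⟩ := by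
        intro hcon
        have : i1 = i2 := congrArg Fin.val hcon
        exact hne (by rw [this])
      exact hdisj k1 hij
    · filter_upwards [hcross k2 k1 h12 ⟨i2, hlt'⟩ ⟨i1, hlt⟩] with a ha
      exact ha.symm
  have hdisju : Pairwise fun i j => DisjSupp (u i) (u j) := by
    intro i j hij
    have hne : ((e i) : ℕ × ℕ) ≠ ((e j) : ℕ × ℕ) := fun h => hij (e.injective (Subtype.ext h))
    filter_upwards [hblkdisj _ _ (e i).2 (e j).2 hne,
      Lp.coeFn_smul (‖blkfun ((e i) : ℕ × ℕ)‖⁻¹) (blkfun ((e i) : ℕ × ℕ)),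
      Lp.coeFn_smul (‖blkfun ((e j) : ℕ × ℕ)‖⁻¹) (blkfun ((e j) : ℕ × ℕ))] with a h1 h2 h3
    rcases h1 with h1 | h1
    · left
      show u i a = 0
      simp only [u]
      rw [h2, Pi.smul_apply, h1, smul_zero]
    · right
      show u j a = 0
      simp only [u]
      rw [h3, Pi.smul_apply, h1, smul_zero]
  refine ⟨u, hnorm, hdisju, ?_⟩
  rintro ⟨C, hCpos, hall⟩
  set k := ⌈C⌉₊ with hk
  have hCk : C ≤ (k : ℝ) := Nat.le_ceil C
  set Gk := Submodule.span ℝ (Set.range (fam k).2) with hGk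
  haveI : FiniteDimensional ℝ Gk :=
    FiniteDimensional.span_of_finite ℝ (Set.finite_range _)
  have hle : Gk ≤ (Submodule.span ℝ (Set.range u)).topologicalClosure := by
    refine le_trans ?_ (Submodule.le_topologicalClosure _)
    refine Submodule.span_le.mpr ?_
    rintro z ⟨i, rfl⟩
    by_cases hz : (fam k).2 i = 0
    · rw [hz]
      exact Submodule.zero_mem _
    · have hmemS : ((k, (i : ℕ)) : ℕ × ℕ) ∈ S := by
        show blkfun (k, (i : ℕ)) ≠ 0
        rw [hblk_eq k i]
        exact hz
      have hen : ((e (e.symm ⟨(k, (i : ℕ)), hmemS⟩)) : ℕ × ℕ) = (k, (i : ℕ)) := by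
        rw [e.apply_symm_apply]
      have hval : (fam k).2 i = ‖(fam k).2 i‖ • u (e.symm ⟨(k, (i : ℕ)), hmemS⟩) := by
        simp only [u]
        rw [hen, hblk_eq k i, smul_inv_smul₀ (norm_ne_zero_iff.mpr hz)]
      rw [hval]
      exact Submodule.smul_mem _ _ (Submodule.subset_span ⟨_, rfl⟩)
  have htriv := hall Gk hle inferInstance
  exact hbad k (trivialOnWith_mono htriv hCk)
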